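/- Let t be a positive integer and G a flower group of type (c₀; c₁, …, c_k). For 0 ≤ i ≤ k write c_i = ν_i·ω_i where ω_i is the greatest divisor of c_i that is relatively prime to t. Then the number of elements g ∈ G such that g^(t^m) = 1 for some integer m ≥ 0 equals ν₁ + ν₂ + ⋯ + ν_k − (k−1)·ν₀. -/

import Mathlib

/-- A cyclic subgroup `C` of `G` is a μ-subgroup if it is not contained in any cyclic
subgroup of `G` other than `C` itself. -/
def IsMuSubgroup {G : Type*} [Group G] (C : Subgroup G) : Prop :=
  IsCyclic ↥C ∧ ∀ K : Subgroup G, IsCyclic ↥K → C ≤ K → C = K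

/-- A noncyclic group `G` is a flower group with pistil `C0` if any two distinct
μ-subgroups of `G` intersect exactly in `C0`. -/
def IsFlowerGroup {G : Type*} [Group G] (C0 : Subgroup G) : Prop :=
  ¬ IsCyclic G ∧
    ∀ C C' : Subgroup G, IsMuSubgroup C → IsMuSubgroup C' → C ≠ C' → C ⊓ C' = C0

open Subgroup

private lemma nu_dvd_pow {t c n w : ℕ} (ht : 0 < t) (hc : c ≠ 0) (hfac : c = n * w)
    (hcop : Nat.Coprime w t) (hmax : ∀ d, d ∣ c → Nat.Coprime d t → d ≤ w) :
    n ∣ t ^ n := by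
  have hn0 : n ≠ 0 := fun h => hc (by simp [hfac, h])
  have hw0 : 0 < w := Nat.pos_of_ne_zero fun h => hc (by simp [hfac, h])
  have ht0 : t ≠ 0 := ht.ne'
  have hsmooth : ∀ p : ℕ, p.Prime → p ∣ n → p ∣ t := by
    intro p pp hpn
    by_contra hpt
    have hcop' : Nat.Coprime (p * w) t :=
      Nat.Coprime.mul ((pp.coprime_iff_not_dvd).mpr hpt) hcop
    have hdvd : p * w ∣ c := hfac ▸ mul_dvd_mul hpn dvd_rfl
    have hle := hmax _ hdvd hcop'
    nlinarith [pp.two_le]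
  rw [← Nat.factorization_le_iff_dvd hn0 (pow_ne_zero _ ht0)]
  intro p
  rw [Nat.factorization_pow]
  simp only [Finsupp.smul_apply, smul_eq_mul]
  by_cases hp : p.Prime ∧ p ∣ n
  · have h1 : 0 < t.factorization p :=
      (Nat.Prime.factorization_pos_of_dvd hp.1 ht0 (hsmooth p hp.1 hp.2))
    calc n.factorization p ≤ n := (Nat.factorization_lt p hn0).le
      _ ≤ n * t.factorization p := Nat.le_mul_of_pos_right _ h1
  · rcases not_and_or.mp hp with h | h
    · simp [Nat.factorization_eq_zero_of_not_prime _ h]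
    · simp [Nat.factorization_eq_zero_of_not_dvd h]

private lemma count_cyclic {H : Type*} [Group H] [Finite H] [IsCyclic H]
    {t : ℕ} (ht : 0 < t) (n w : ℕ)
    (hfac : Nat.card H = n * w) (hcop : Nat.Coprime w t)
    (hmax : ∀ d, d ∣ Nat.card H → Nat.Coprime d t → d ≤ w) :
    Nat.card {x : H // ∃ m : ℕ, x ^ t ^ m = 1} = n := by
  have hc0 : Nat.card H ≠ 0 := Nat.card_pos.ne'
  have hn0 : n ≠ 0 := fun h => hc0 (by simp [hfac, h])
  have hw0 : 0 < w := Nat.pos_of_ne_zero fun h => hc0 (by simp [hfac, h])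
  have hdvd : n ∣ t ^ n := nu_dvd_pow ht hc0 hfac hcop hmax
  have hset : ∀ x : H, (∃ m : ℕ, x ^ t ^ m = 1) ↔ x ^ n = 1 := by
    intro x
    constructor
    · rintro ⟨m, hm⟩
      have h1 : orderOf x ∣ t ^ m := orderOf_dvd_of_pow_eq_one hm
      have h2 : orderOf x ∣ n * w := hfac ▸ orderOf_dvd_natCard x
      have h3 : Nat.Coprime (orderOf x) w :=
        ((hcop.pow_right m).coprime_dvd_right h1).symm
      exact orderOf_dvd_iff_pow_eq_one.mp (h3.dvd_of_dvd_mul_right h2)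
    · intro hx
      obtain ⟨s, hs⟩ := hdvd
      exact ⟨n, by rw [hs, pow_mul, hx, one_pow]⟩
  obtain ⟨g, hg⟩ := IsCyclic.exists_generator (α := H)
  have hog : orderOf g = Nat.card H := by
    rw [← Nat.card_zpowers]
    apply Nat.card_congr
    exact Equiv.subtypeUnivEquiv hg
  have hpow : (g ^ w) ^ n = 1 := by
    rw [← pow_mul, mul_comm w n, ← hfac, ← hog, pow_orderOf_eq_one]
  have key : ∀ x : H, x ^ n = 1 ↔ x ∈ zpowers (g ^ w) := by
    intro x
    constructor
    · intro hx
      obtain ⟨m, hm⟩ : ∃ m : ℕ, g ^ m = x :=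
        Submonoid.mem_powers_iff _ _ |>.mp (mem_powers_iff_mem_zpowers.mpr (hg x))
      have h1 : orderOf g ∣ m * n := orderOf_dvd_of_pow_eq_one (by rw [pow_mul, hm, hx])
      rw [hog, hfac] at h1
      have h2 : w ∣ m := by
        have : n * w ∣ n * m := by rwa [mul_comm m n] at h1
        exact (mul_dvd_mul_iff_left hn0).mp this
      obtain ⟨j, hj⟩ := h2
      exact ⟨(j : ℤ), by show (g ^ w) ^ (j : ℤ) = x; rw [zpow_natCast, ← pow_mul, ← hj, hm]⟩
    · rintro ⟨j, rfl⟩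
      rw [← zpow_natCast, ← zpow_mul, mul_comm, zpow_mul, zpow_natCast, hpow, one_zpow]
  have : Nat.card {x : H // ∃ m : ℕ, x ^ t ^ m = 1} = Nat.card (zpowers (g ^ w)) := by
    apply Nat.card_congr
    exact Equiv.subtypeEquivRight fun x => (hset x).trans (key x)
  rw [this, Nat.card_zpowers, orderOf_pow, hog, hfac]
  rw [Nat.gcd_comm, Nat.gcd_eq_left (dvd_mul_left w n), Nat.mul_div_cancel _ hw0]



/-- If G is a flower group of type (c₀; c₁, …, c_k), c_i = ν_i·ω_i with ω_i
the greatest divisor of c_i coprime to t, then the number of elements g ∈ G such that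
g^(t^m) = 1 for some m ≥ 0 equals ν₁ + ⋯ + ν_k − (k−1)·ν₀. -/

theorem stmt15 (t : ℕ) (ht : 0 < t) {G : Type*} [Group G] [Finite G]
    (C0 : Subgroup G) (hG : IsFlowerGroup C0)
    (k : ℕ) (P : Fin k → Subgroup G) (hinj : Function.Injective P)
    (hpetals : ∀ C : Subgroup G, IsMuSubgroup C ↔ ∃ i, C = P i)
    (ν0 ω0 : ℕ) (ν ω : Fin k → ℕ)
    (hfac0 : Nat.card C0 = ν0 * ω0) (hω0cop : Nat.Coprime ω0 t)
    (hω0max : ∀ d : ℕ, d ∣ Nat.card C0 → Nat.Coprime d t → d ≤ ω0)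
    (hfac : ∀ i, Nat.card (P i) = ν i * ω i) (hωcop : ∀ i, Nat.Coprime (ω i) t)
    (hωmax : ∀ i, ∀ d : ℕ, d ∣ Nat.card (P i) → Nat.Coprime d t → d ≤ ω i) :
    Nat.card {g : G // ∃ m : ℕ, g ^ t ^ m = 1} + (k - 1) * ν0 = ∑ i, ν i := by
  classical
  have _inst := Fintype.ofFinite G
  have hP : ∀ i, IsMuSubgroup (P i) := fun i => (hpetals (P i)).mpr ⟨i, rfl⟩
  have hPcyc : ∀ i, IsCyclic ↥(P i) := fun i => (hP i).1
  have hcover : ∀ g : G, ∃ i, g ∈ P i := by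
    intro g
    have hfin : ({K : Subgroup G | IsCyclic ↥K ∧ g ∈ K}).Finite := Set.toFinite _
    have hzcyc : IsCyclic ↥(Subgroup.zpowers g) := by
      refine ⟨⟨⟨g, Subgroup.mem_zpowers g⟩, fun x => ?_⟩⟩
      obtain ⟨j, hj⟩ := x.2
      exact ⟨j, Subtype.ext (by simpa using hj)⟩
    have hne : ({K : Subgroup G | IsCyclic ↥K ∧ g ∈ K}).Nonempty :=
      ⟨Subgroup.zpowers g, hzcyc, Subgroup.mem_zpowers g⟩
    obtain ⟨C, hCmem, hCmax⟩ := Set.Finite.exists_maximalFor id _ hfin hne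
    have hmu : IsMuSubgroup C :=
      ⟨hCmem.1, fun K hK hle => le_antisymm hle (hCmax ⟨hK, hle hCmem.2⟩ hle)⟩
    obtain ⟨i, rfl⟩ := (hpetals C).mp hmu
    exact ⟨i, hCmem.2⟩
  have hk1 : 0 < k := by
    obtain ⟨i, _⟩ := hcover 1
    exact i.pos
  have hk2 : 2 ≤ k := by
    by_contra hlt
    have hk : k = 1 := by omega
    subst hk
    refine hG.1 ?_
    have hall : ∀ g : G, g ∈ P 0 := fun g => by
      obtain ⟨i, hi⟩ := hcover g; rwa [Subsingleton.elim i 0] at hi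
    have htop : P 0 = ⊤ := by rw [Subgroup.eq_top_iff']; exact hall
    have hcyc : IsCyclic ↥(⊤ : Subgroup G) := htop ▸ hPcyc 0
    exact isCyclic_of_surjective Subgroup.topEquiv.toMonoidHom Subgroup.topEquiv.surjective
  have hC0le : ∀ i, C0 ≤ P i := by
    intro i
    obtain ⟨j, hj⟩ : ∃ j : Fin k, j ≠ i :=
      Fintype.exists_ne_of_one_lt_card (by simp only [Fintype.card_fin]; omega) i
    have hinf := hG.2 (P j) (P i) (hP j) (hP i) (fun h => hj (hinj h))
    rw [← hinf]; exact inf_le_right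
  have i0 : Fin k := ⟨0, hk1⟩
  haveI := hPcyc i0
  have hC0cyc : IsCyclic ↥C0 := Subgroup.isCyclic_of_le (hC0le i0)
  -- counting in a cyclic subgroup, as a subtype of G
  have hsub : ∀ C : Subgroup G, IsCyclic ↥C →
      ∀ nn wn : ℕ, Nat.card C = nn * wn → Nat.Coprime wn t →
      (∀ d, d ∣ Nat.card C → Nat.Coprime d t → d ≤ wn) →
      Nat.card {g : G // g ∈ C ∧ ∃ m : ℕ, g ^ t ^ m = 1} = nn := by
    intro C hcy nn wn h1 h2 h3
    haveI := hcy
    rw [← count_cyclic ht nn wn h1 h2 h3]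
    apply Nat.card_congr
    refine
      { toFun := fun x => ⟨⟨x.1, x.2.1⟩, by
          obtain ⟨m, hm⟩ := x.2.2
          exact ⟨m, Subtype.ext (by simpa using hm)⟩⟩
        invFun := fun y => ⟨(y.1 : G), y.1.2, by
          obtain ⟨m, hm⟩ := y.2
          exact ⟨m, by simpa using congrArg (fun z : ↥C => (z : G)) hm⟩⟩
        left_inv := fun x => rfl
        right_inv := fun y => rfl }
  set p : G → Prop := fun g => ∃ m : ℕ, g ^ t ^ m = 1 with hp
  set a : Fin k → Finset G := fun i => Finset.univ.filter fun g => g ∈ P i ∧ p g with ha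
  set b : Finset G := Finset.univ.filter fun g => g ∈ C0 ∧ p g with hb
  have hmema : ∀ i (g : G), g ∈ a i ↔ g ∈ P i ∧ p g := by
    intro i g; simp only [ha, Finset.mem_filter, Finset.mem_univ, true_and]
  have hmemb : ∀ g : G, g ∈ b ↔ g ∈ C0 ∧ p g := by
    intro g; simp only [hb, Finset.mem_filter, Finset.mem_univ, true_and]
  have hacard : ∀ i, (a i).card = ν i := by
    intro i
    rw [ha, ← hsub (P i) (hPcyc i) (ν i) (ω i) (hfac i) (hωcop i) (hωmax i),
      Nat.card_eq_fintype_card, Fintype.card_subtype]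
  have hbcard : b.card = ν0 := by
    rw [hb, ← hsub C0 hC0cyc ν0 ω0 hfac0 hω0cop hω0max,
      Nat.card_eq_fintype_card, Fintype.card_subtype]
  have hbsub : ∀ i, b ⊆ a i := by
    intro i g hg
    rw [hmemb] at hg
    rw [hmema]
    exact ⟨hC0le i hg.1, hg.2⟩
  have hintab : ∀ i j, i ≠ j → a i ∩ a j = b := by
    intro i j hij
    have hinf := hG.2 (P i) (P j) (hP i) (hP j) (fun h => hij (hinj h))
    ext g
    simp only [Finset.mem_inter, hmema, hmemb]
    constructor
    · rintro ⟨⟨h1, h2⟩, h3, -⟩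
      rw [← hinf]
      exact ⟨Subgroup.mem_inf.mpr ⟨h1, h3⟩, h2⟩
    · rintro ⟨h1, h2⟩
      rw [← hinf, Subgroup.mem_inf] at h1
      exact ⟨⟨h1.1, h2⟩, h1.2, h2⟩
  have hunion : Finset.univ.filter p = Finset.univ.biUnion a := by
    ext g
    simp only [Finset.mem_filter, Finset.mem_univ, true_and, Finset.mem_biUnion, hmema]
    constructor
    · intro hg
      obtain ⟨i, hi⟩ := hcover g
      exact ⟨i, hi, hg⟩
    · rintro ⟨i, -, hi⟩
      exact hi
  have hsplit : Finset.univ.biUnion a = b ∪ Finset.univ.biUnion (fun i => a i \ b) := by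
    ext g
    simp only [Finset.mem_biUnion, Finset.mem_union, Finset.mem_univ, true_and,
      Finset.mem_sdiff]
    constructor
    · rintro ⟨i, hi⟩
      by_cases hgb : g ∈ b
      · exact Or.inl hgb
      · exact Or.inr ⟨i, hi, hgb⟩
    · rintro (hgb | ⟨i, hi, -⟩)
      · exact ⟨i0, hbsub i0 hgb⟩
      · exact ⟨i, hi⟩
  have hdisjb : Disjoint b (Finset.univ.biUnion fun i => a i \ b) := by
    refine Finset.disjoint_left.mpr fun g hg hg' => ?_
    obtain ⟨i, -, hi⟩ := Finset.mem_biUnion.mp hg'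
    exact (Finset.mem_sdiff.mp hi).2 hg
  have hpair : ∀ i ∈ Finset.univ, ∀ j ∈ Finset.univ, i ≠ j →
      Disjoint (a i \ b) (a j \ b) := by
    intro i _ j _ hij
    refine Finset.disjoint_left.mpr fun g hgi hgj => ?_
    have hgm : g ∈ a i ∩ a j :=
      Finset.mem_inter.mpr ⟨(Finset.mem_sdiff.mp hgi).1, (Finset.mem_sdiff.mp hgj).1⟩
    rw [hintab i j hij] at hgm
    exact (Finset.mem_sdiff.mp hgi).2 hgm
  have hcard1 : (Finset.univ.filter p).card = ν0 + ∑ i, (ν i - ν0) := by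
    rw [hunion, hsplit, Finset.card_union_of_disjoint hdisjb, Finset.card_biUnion hpair,
      hbcard]
    congr 1
    refine Finset.sum_congr rfl fun i _ => ?_
    rw [Finset.card_sdiff_of_subset (hbsub i), hacard i, hbcard]
  have hνle : ∀ i, ν0 ≤ ν i := by
    intro i
    rw [← hacard i, ← hbcard]
    exact Finset.card_le_card (hbsub i)
  have hkν : k * ν0 = ∑ _i : Fin k, ν0 := by
    simp [Finset.sum_const, mul_comm]
  have hsum : ∑ i, (ν i - ν0) + k * ν0 = ∑ i, ν i := by
    rw [hkν, ← Finset.sum_add_distrib]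
    exact Finset.sum_congr rfl fun i _ => Nat.sub_add_cancel (hνle i)
  have hS : Nat.card {g : G // ∃ m : ℕ, g ^ t ^ m = 1} = (Finset.univ.filter p).card := by
    rw [Nat.card_eq_fintype_card]
    exact Fintype.card_subtype _
  rw [hS, hcard1]
  have hk' : k - 1 + 1 = k := Nat.succ_pred_eq_of_pos hk1
  calc ν0 + ∑ i, (ν i - ν0) + (k - 1) * ν0
      = ∑ i, (ν i - ν0) + ((k - 1) + 1) * ν0 := by ring
    _ = ∑ i, ν i := by rw [hk', hsum]
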